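/- arXiv:2403.08658 — 3 statements merged into one kernel-verified Lean document; each statement's English description precedes it below -/
import Mathlib

section
/- Let L : ℝ^n → ℝ be continuous with compact sublevel sets, and let R : ℝ^n → Set(ℝ^n) be a set-valued map with closed graph such that x ∈ R(x) for all x in a closed set X, with R(x) ⊆ X. Let (x^i) satisfy x^{i+1} ∈ argmin{ L(u) : u ∈ R(x^i) } with the argmin nonempty. If a subsequence (x^i)_{i∈I} converges to x̄ and the value function m(x) = min{L(u) : u ∈ R(x)} is upper semicontinuous, then L(x̄) = m(x̄) and x̄ ∈ argmin{ L(u) : u ∈ R(x̄) }, i.e., x̄ is a fixed point of the map F(x) = argmin{L(u) : u ∈ R(x)}. -/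
open Filter Topology

/-- accumulation points of the NS-DASF iterates are fixed points of
the local argmin map. -/
theorem stmt_2 {n : ℕ}
    (L : (Fin n → ℝ) → ℝ) (hL : Continuous L)
    (hsub : ∀ c : ℝ, IsCompact {x : Fin n → ℝ | L x ≤ c})
    (X : Set (Fin n → ℝ)) (hX : IsClosed X)
    (R : (Fin n → ℝ) → Set (Fin n → ℝ))
    (hgraph : IsClosed {p : (Fin n → ℝ) × (Fin n → ℝ) | p.2 ∈ R p.1})
    (hself : ∀ x ∈ X, x ∈ R x)
    (hRX : ∀ x, R x ⊆ X)
    (m : (Fin n → ℝ) → ℝ)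
    (hm : ∀ x, (∃ u ∈ R x, L u = m x) ∧ ∀ u ∈ R x, m x ≤ L u)
    (husc : ∀ (xs : ℕ → (Fin n → ℝ)) (xbar : Fin n → ℝ) (mbar : ℝ),
      Tendsto xs atTop (𝓝 xbar) →
      Tendsto (fun i => m (xs i)) atTop (𝓝 mbar) → mbar ≤ m xbar)
    (x : ℕ → Fin n → ℝ) (hx0 : x 0 ∈ X)
    (hstep : ∀ i, x (i + 1) ∈ R (x i) ∧ ∀ u ∈ R (x i), L (x (i + 1)) ≤ L u)
    (φ : ℕ → ℕ) (hφ : StrictMono φ) (xbar : Fin n → ℝ)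
    (hconv : Tendsto (fun i => x (φ i)) atTop (𝓝 xbar)) :
    L xbar = m xbar ∧ xbar ∈ R xbar ∧ ∀ u ∈ R xbar, L xbar ≤ L u := by
  -- all iterates lie in X
  have hXmem : ∀ i, x i ∈ X := by
    intro i
    induction i with
    | zero => exact hx0
    | succ k ih => exact hRX _ (hstep k).1
  -- L ∘ x is antitone
  have hanti : Antitone fun i => L (x i) := by
    apply antitone_nat_of_succ_le
    intro i
    exact (hstep i).2 (x i) (hself _ (hXmem i))
  -- L(x (i+1)) = m (x i)
  have hval : ∀ i, L (x (i + 1)) = m (x i) := by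
    intro i
    apply le_antisymm
    · obtain ⟨u, hu, huL⟩ := (hm (x i)).1
      exact huL ▸ (hstep i).2 u hu
    · exact (hm (x i)).2 _ (hstep i).1
  -- L along the subsequence converges to L xbar
  have hLconv : Tendsto (fun i => L (x (φ i))) atTop (𝓝 (L xbar)) :=
    (hL.tendsto xbar).comp hconv
  -- m (x (φ i)) = L (x (φ i + 1)) is squeezed between L(x (φ (i+1))) and L(x (φ i))
  have hmconv : Tendsto (fun i => m (x (φ i))) atTop (𝓝 (L xbar)) := by
    have h1 : Tendsto (fun i => L (x (φ (i + 1)))) atTop (𝓝 (L xbar)) :=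
      hLconv.comp (tendsto_add_atTop_nat 1)
    refine tendsto_of_tendsto_of_tendsto_of_le_of_le h1 hLconv ?_ ?_
    · intro i
      show L (x (φ (i + 1))) ≤ m (x (φ i))
      rw [← hval (φ i)]
      exact hanti (Nat.succ_le_of_lt (hφ (Nat.lt_succ_self i)))
    · intro i
      show m (x (φ i)) ≤ L (x (φ i))
      rw [← hval (φ i)]
      exact hanti (Nat.le_succ _)
  have h1 : L xbar ≤ m xbar := husc _ xbar (L xbar) hconv hmconv
  have hxbarX : xbar ∈ X :=
    hX.mem_of_tendsto hconv (Eventually.of_forall fun i => hXmem (φ i))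
  have hxbarR : xbar ∈ R xbar := hself _ hxbarX
  have h2 : m xbar ≤ L xbar := (hm xbar).2 _ hxbarR
  exact ⟨le_antisymm h1 h2, hxbarR, fun u hu => (le_antisymm h1 h2) ▸ (hm xbar).2 u hu⟩
end

section
/- Let f : ℝ^n → ℝ be differentiable, g = Σ_k g_k convex and block-separable over a block decomposition x = (x_1,…,x_K), and X = X_1 × ⋯ × X_K convex and block-separable. Suppose a point x° satisfies, for every block index k, the inclusion 0 ∈ ∇f(x°) + ∂g(x°) + N_X(x°) + V_k, where V_k is a product cone whose k-th block is {0}. Then 0 ∈ ∇f(x°) + ∂g(x°) + N_X(x°), i.e., x° is a stationary point of min_{x∈X} f(x) + g(x). -/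
open scoped RealInnerProductSpace Pointwise

/-- Convex subdifferential. -/
def subdiff {E : Type*} [NormedAddCommGroup E] [InnerProductSpace ℝ E]
    (g : E → ℝ) (x : E) : Set E :=
  {v | ∀ y, g x + ⟪v, y - x⟫ ≤ g y}

/-- Normal cone to a set at a point. -/
def normalCone {E : Type*} [NormedAddCommGroup E] [InnerProductSpace ℝ E]
    (C : Set E) (x : E) : Set E :=
  {v | ∀ y ∈ C, ⟪v, y - x⟫ ≤ 0}

/-- if the per-node stationarity inclusions
`0 ∈ ∇f(x°) + ∂g(x°) + N_X(x°) + V_k` hold for every block `k`, where `V_k` is a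
product cone with zero `k`-th block, and `g` and `X` are block-separable, then
`x°` is a stationary point: `0 ∈ ∇f(x°) + ∂g(x°) + N_X(x°)`. -/
theorem stmt_9 {K Q : ℕ} (M : Fin K → ℕ)
    (f : PiLp 2 (fun k : Fin K => EuclideanSpace ℝ (Fin (M k) × Fin Q)) → ℝ)
    (hf : Differentiable ℝ f)
    (X : ∀ k : Fin K, Set (EuclideanSpace ℝ (Fin (M k) × Fin Q)))
    (hXconv : ∀ k, Convex ℝ (X k))
    (g : ∀ k : Fin K, EuclideanSpace ℝ (Fin (M k) × Fin Q) → ℝ)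
    (hg : ∀ k, ConvexOn ℝ Set.univ (g k))
    (W : ∀ k k' : Fin K, Set (EuclideanSpace ℝ (Fin (M k') × Fin Q)))
    (hWcone : ∀ k k', ∀ (c : ℝ), 0 ≤ c → ∀ v ∈ W k k', c • v ∈ W k k')
    (hWk : ∀ k, W k k = {0})
    (x₀ : PiLp 2 (fun k : Fin K => EuclideanSpace ℝ (Fin (M k) × Fin Q)))
    (hx₀ : ∀ k, x₀ k ∈ X k)
    (hincl : ∀ k : Fin K,
      (0 : PiLp 2 (fun k : Fin K => EuclideanSpace ℝ (Fin (M k) × Fin Q))) ∈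
        ({gradient f x₀} : Set (PiLp 2 (fun k : Fin K => EuclideanSpace ℝ (Fin (M k) × Fin Q))))
        + subdiff (fun y => ∑ k', g k' (y k')) x₀
        + normalCone {y : PiLp 2 (fun k : Fin K => EuclideanSpace ℝ (Fin (M k) × Fin Q)) |
            ∀ k', y k' ∈ X k'} x₀
        + {v : PiLp 2 (fun k : Fin K => EuclideanSpace ℝ (Fin (M k) × Fin Q)) |
            ∀ k', v k' ∈ W k k'}) :
    (0 : PiLp 2 (fun k : Fin K => EuclideanSpace ℝ (Fin (M k) × Fin Q))) ∈
      ({gradient f x₀} : Set (PiLp 2 (fun k : Fin K => EuclideanSpace ℝ (Fin (M k) × Fin Q))))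
      + subdiff (fun y => ∑ k', g k' (y k')) x₀
      + normalCone {y : PiLp 2 (fun k : Fin K => EuclideanSpace ℝ (Fin (M k) × Fin Q)) |
          ∀ k', y k' ∈ X k'} x₀ := by

  classical
  -- Step 1: extract per-block stationarity from each inclusion.
  have H : ∀ k : Fin K, ∃ sk nk,
      sk ∈ subdiff (g k) (x₀ k) ∧ nk ∈ normalCone (X k) (x₀ k) ∧
      gradient f x₀ k + sk + nk = 0 := by
    intro k
    obtain ⟨p, hp, v, hv, hpv⟩ := Set.mem_add.mp (hincl k)
    obtain ⟨q, hq, n, hn, hqn⟩ := Set.mem_add.mp hp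
    obtain ⟨c, hc, s, hs, hcs⟩ := Set.mem_add.mp hq
    rw [Set.mem_singleton_iff] at hc
    subst hc
    have hvk : v k = 0 := by
      have := hv k
      rw [hWk k] at this
      simpa using this
    have hkeq : gradient f x₀ k + s k + n k = 0 := by
      have h0 : (gradient f x₀ + s + n + v) k = (0 :
          PiLp 2 (fun k : Fin K => EuclideanSpace ℝ (Fin (M k) × Fin Q))) k := by
        rw [show gradient f x₀ + s + n + v = 0 by rw [← hpv, ← hqn, ← hcs]]
      simpa [hvk] using h0
    refine ⟨s k, n k, ?_, ?_, hkeq⟩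
    · -- s k ∈ subdiff (g k) (x₀ k)
      intro z
      set yz : PiLp 2 (fun k : Fin K => EuclideanSpace ℝ (Fin (M k) × Fin Q)) :=
        (WithLp.equiv 2 _).symm (Function.update x₀ k z) with hyz
      have hyzk : ∀ k', yz k' = Function.update x₀ k z k' := fun k' => rfl
      have hy := hs yz
      have hinner : ⟪s, yz - x₀⟫ = ⟪s k, z - x₀ k⟫ := by
        rw [PiLp.inner_apply, Finset.sum_eq_single_of_mem k (Finset.mem_univ k)
          (fun k' _ hk' => by simp [PiLp.sub_apply, hyzk, Function.update_of_ne hk'])]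
        simp [PiLp.sub_apply, hyzk]
      have hsum : ∑ k', g k' (yz k') -
          ∑ k', g k' (x₀ k') = g k z - g k (x₀ k) := by
        rw [← Finset.sum_sub_distrib, Finset.sum_eq_single_of_mem k (Finset.mem_univ k)
          (fun k' _ hk' => by simp [hyzk, Function.update_of_ne hk'])]
        simp [hyzk]
      rw [hinner] at hy
      linarith
    · -- n k ∈ normalCone (X k) (x₀ k)
      intro z hz
      set yz : PiLp 2 (fun k : Fin K => EuclideanSpace ℝ (Fin (M k) × Fin Q)) :=
        (WithLp.equiv 2 _).symm (Function.update x₀ k z) with hyz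
      have hyzk : ∀ k', yz k' = Function.update x₀ k z k' := fun k' => rfl
      have hmem : yz ∈
          {y : PiLp 2 (fun k : Fin K => EuclideanSpace ℝ (Fin (M k) × Fin Q)) |
            ∀ k', y k' ∈ X k'} := by
        intro k'
        rcases eq_or_ne k' k with rfl | hne
        · simpa [hyzk] using hz
        · simpa [hyzk, Function.update_of_ne hne] using hx₀ k'
      have hy := hn _ hmem
      have hinner : ⟪n, yz - x₀⟫ = ⟪n k, z - x₀ k⟫ := by
        rw [PiLp.inner_apply, Finset.sum_eq_single_of_mem k (Finset.mem_univ k)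
          (fun k' _ hk' => by simp [PiLp.sub_apply, hyzk, Function.update_of_ne hk'])]
        simp [PiLp.sub_apply, hyzk]
      rwa [hinner] at hy
  choose S N hS hN hEq using H
  set Sf : PiLp 2 (fun k : Fin K => EuclideanSpace ℝ (Fin (M k) × Fin Q)) :=
    (WithLp.equiv 2 _).symm S with hSf
  set Nf : PiLp 2 (fun k : Fin K => EuclideanSpace ℝ (Fin (M k) × Fin Q)) :=
    (WithLp.equiv 2 _).symm N with hNf
  have hSfk : ∀ k, Sf k = S k := fun k => rfl
  have hNfk : ∀ k, Nf k = N k := fun k => rfl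
  refine Set.mem_add.mpr ⟨gradient f x₀ + Sf,
    Set.mem_add.mpr ⟨gradient f x₀, rfl, Sf, ?_, rfl⟩, Nf, ?_, ?_⟩
  · -- Sf ∈ subdiff of the sum
    intro y
    have h1 : ∀ k', g k' (x₀ k') + ⟪S k', y k' - x₀ k'⟫ ≤ g k' (y k') :=
      fun k' => hS k' (y k')
    have h2 : ⟪Sf, y - x₀⟫ = ∑ k', ⟪S k', y k' - x₀ k'⟫ := by
      rw [PiLp.inner_apply]
      exact Finset.sum_congr rfl fun k' _ => by rw [hSfk]; rfl
    rw [h2, ← Finset.sum_add_distrib]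
    exact Finset.sum_le_sum fun k' _ => h1 k'
  · -- Nf ∈ normal cone of the product
    intro y hy
    have h2 : ⟪Nf, y - x₀⟫ = ∑ k', ⟪N k', y k' - x₀ k'⟫ := by
      rw [PiLp.inner_apply]
      exact Finset.sum_congr rfl fun k' _ => by rw [hNfk]; rfl
    rw [h2]
    exact Finset.sum_nonpos fun k' _ => hN k' (y k') (hy k')
  · -- the sum is zero
    have : gradient f x₀ + Sf + Nf = 0 := by
      apply (WithLp.equiv 2 _).injective
      funext k
      simpa [hSfk, hNfk] using hEq k
    linear_combination (norm := abel) this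
end

section
/- Let F : X → Set(X) be a set-valued map on a compact set X ⊆ ℝ^n such that: (i) every selection x^{i+1} ∈ F(x^i) satisfies L(x^{i+1}) ≤ L(x^i) for a continuous L; (ii) every accumulation point x̄ of a sequence generated by x^{i+1} ∈ F(x^i) satisfies x̄ ∈ F(x̄). Then for any such sequence, L(x^i) converges and lim L(x^i) = L(x̄) = min{ L(u) : u ∈ F(x̄) } for every accumulation point x̄, provided F(x̄) is defined as the argmin of L over a set containing x̄. -/
open Filter Topology

/-- abstract fixed-point convergence statement combining monotone
descent with the fixed-point property of accumulation points. -/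
theorem stmt_19 {n : ℕ}
    (X : Set (Fin n → ℝ)) (hXcpt : IsCompact X)
    (L : (Fin n → ℝ) → ℝ) (hL : Continuous L)
    (F : (Fin n → ℝ) → Set (Fin n → ℝ))
    (hFX : ∀ y ∈ X, F y ⊆ X)
    -- F(x) is the argmin of L over a set G(x) containing x
    (G : (Fin n → ℝ) → Set (Fin n → ℝ))
    (hG : ∀ y ∈ X, y ∈ G y ∧ F y = {u ∈ G y | ∀ v ∈ G y, L u ≤ L v})
    (x : ℕ → Fin n → ℝ) (hx0 : x 0 ∈ X)
    (hstep : ∀ i, x (i + 1) ∈ F (x i))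
    -- (i) monotone descent along the sequence
    (hdesc : ∀ i, L (x (i + 1)) ≤ L (x i))
    -- (ii) accumulation points are fixed points
    (hfix : ∀ xbar : Fin n → ℝ,
      (∃ φ : ℕ → ℕ, StrictMono φ ∧ Tendsto (fun i => x (φ i)) atTop (𝓝 xbar)) →
      xbar ∈ F xbar) :
    (∃ l : ℝ, Tendsto (fun i => L (x i)) atTop (𝓝 l)) ∧
    (∀ xbar : Fin n → ℝ,
      (∃ φ : ℕ → ℕ, StrictMono φ ∧ Tendsto (fun i => x (φ i)) atTop (𝓝 xbar)) →
      Tendsto (fun i => L (x i)) atTop (𝓝 (L xbar)) ∧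
      L xbar ∈ lowerBounds (L '' F xbar) ∧ L xbar ∈ L '' F xbar) := by
  -- the sequence stays in X
  have hxX : ∀ i, x i ∈ X := by
    intro i
    induction i with
    | zero => exact hx0
    | succ k ih => exact hFX (x k) ih (hstep k)
  -- L ∘ x is antitone
  have hanti : Antitone (fun i => L (x i)) :=
    antitone_nat_of_succ_le hdesc
  -- bounded below
  have hbdd : BddBelow (Set.range (fun i => L (x i))) := by
    obtain ⟨C, hC⟩ := (hXcpt.image hL).bddBelow
    exact ⟨C, fun r ⟨i, hi⟩ => hi ▸ hC ⟨x i, hxX i, rfl⟩⟩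
  have hconv : Tendsto (fun i => L (x i)) atTop (𝓝 (⨅ i, L (x i))) :=
    tendsto_atTop_ciInf hanti hbdd
  refine ⟨⟨_, hconv⟩, fun xbar hacc => ?_⟩
  obtain ⟨φ, hφ, hφt⟩ := hacc
  have hxbarF : xbar ∈ F xbar := hfix xbar ⟨φ, hφ, hφt⟩
  have hxbarX : xbar ∈ X := by
    have : IsClosed X := hXcpt.isClosed
    exact this.mem_of_tendsto hφt (Eventually.of_forall fun i => hxX (φ i))
  -- limit along subsequence is L xbar, hence whole limit is L xbar
  have hsub : Tendsto (fun i => L (x (φ i))) atTop (𝓝 (L xbar)) :=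
    (hL.continuousAt.tendsto.comp hφt)
  have hsub' : Tendsto (fun i => L (x (φ i))) atTop (𝓝 (⨅ i, L (x i))) :=
    hconv.comp hφ.tendsto_atTop
  have heq : ⨅ i, L (x i) = L xbar := tendsto_nhds_unique hsub' hsub
  refine ⟨heq ▸ hconv, ?_, ⟨xbar, hxbarF, rfl⟩⟩
  rintro r ⟨u, huF, rfl⟩
  obtain ⟨hGmem, hFeq⟩ := hG xbar hxbarX
  rw [hFeq] at hxbarF huF
  exact hxbarF.2 u huF.1
end
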